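/- Let (N, v) be a simple game with n players, collection of winning coalitions 𝒲 and collection of losing coalitions 𝓛. Suppose (2/n)𝟙 lies in the convex hull of the characteristic vectors of the winning coalitions and (1/2)𝟙 lies in the convex hull of the characteristic vectors of the losing coalitions. Then for every p ∈ Q(𝒲) there exists a losing coalition C with p(C) ≥ n/4; consequently the critical threshold value α = min_{p ∈ Q(𝒲)} max_{C ∈ 𝓛} p(C) equals n/4. -/

import Mathlib

/-- Extract a finite convex-combination representation, packaged with an
evaluation identity for arbitrary linear functionals given by weights `q`. -/
lemma hull_rep_eval {N : Type*} [Fintype N] [DecidableEq N] (v : Finset N → ℕ) (m : ℕ)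
    {y : N → ℝ}
    (h : y ∈ convexHull ℝ {x : N → ℝ | ∃ C : Finset N, v C = m ∧
      x = fun i => if i ∈ C then 1 else 0}) :
    ∃ (ι : Type) (t : Finset ι) (w : ι → ℝ) (W : ι → Finset N),
      (∀ k ∈ t, 0 ≤ w k) ∧ ∑ k ∈ t, w k = 1 ∧ (∀ k ∈ t, v (W k) = m) ∧
      ∀ q : N → ℝ, ∑ j, q j * y j = ∑ k ∈ t, w k * ∑ j ∈ W k, q j := by
  rw [convexHull_eq] at h
  obtain ⟨ι, t, w, z, hw0, hw1, hz, hc⟩ := h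
  classical
  have hW : ∀ k ∈ t, ∃ C : Finset N, v C = m ∧ z k = fun i => if i ∈ C then 1 else 0 := hz
  choose! W hWm hWz using hW
  refine ⟨ι, t, w, W, hw0, hw1, hWm, ?_⟩
  intro q
  have hy : y = ∑ k ∈ t, w k • z k := by
    rw [← hc, Finset.centerMass_eq_of_sum_1 _ _ hw1]
  have hyj : ∀ j, y j = ∑ k ∈ t, w k * z k j := by
    intro j; rw [hy]; simp [Finset.sum_apply]
  calc ∑ j, q j * y j = ∑ j, ∑ k ∈ t, q j * (w k * z k j) := by
        simp only [hyj, Finset.mul_sum]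
    _ = ∑ k ∈ t, ∑ j, q j * (w k * z k j) := Finset.sum_comm
    _ = ∑ k ∈ t, w k * ∑ j ∈ W k, q j := by
        refine Finset.sum_congr rfl fun k hk => ?_
        have hrw : ∑ i ∈ W k, w k * q i = ∑ j : N, if j ∈ W k then w k * q j else 0 := by
          rw [Finset.sum_ite_mem, Finset.univ_inter]
        rw [hWz k hk, Finset.mul_sum, hrw]
        refine Finset.sum_congr rfl fun j _ => ?_
        by_cases hj : j ∈ W k <;> simp [hj, mul_comm]

/-- For a simple game `(N, v)` with `n` players: if `(2/n)𝟙` lies in the convex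
hull of the characteristic vectors of the winning coalitions and `(1/2)𝟙` lies in
the convex hull of the characteristic vectors of the losing coalitions, then for
every `p ∈ Q(𝒲)` there is a losing coalition `C` with `p(C) ≥ n / 4`;
consequently the critical threshold value `α = min_{p ∈ Q(𝒲)} max_{C ∈ 𝓛} p(C)`
equals `n / 4`. -/
theorem critical_threshold_eq_of_convex_hull_conditions
    {N : Type*} [Fintype N] [DecidableEq N] (v : Finset N → ℕ)
    (hv01 : ∀ C, v C = 0 ∨ v C = 1)
    (hmono : ∀ C S : Finset N, C ⊆ S → v C ≤ v S)
    (hempty : v (∅ : Finset N) = 0)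
    (hfull : v (Finset.univ : Finset N) = 1)
    (hwin : (fun _ : N => 2 / (Fintype.card N : ℝ)) ∈
      convexHull ℝ {x : N → ℝ | ∃ C : Finset N, v C = 1 ∧
        x = fun i => if i ∈ C then 1 else 0})
    (hlose : (fun _ : N => (1 : ℝ) / 2) ∈
      convexHull ℝ {x : N → ℝ | ∃ C : Finset N, v C = 0 ∧
        x = fun i => if i ∈ C then 1 else 0}) :
    (∀ p : N → ℝ,
      ((∀ i, 0 ≤ p i) ∧ (∀ C : Finset N, v C = 1 → 1 ≤ ∑ i ∈ C, p i)) →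
      ∃ C : Finset N, v C = 0 ∧ (Fintype.card N : ℝ) / 4 ≤ ∑ i ∈ C, p i) ∧
    (∃ p : N → ℝ,
      ((∀ i, 0 ≤ p i) ∧ (∀ C : Finset N, v C = 1 → 1 ≤ ∑ i ∈ C, p i)) ∧
      ∀ C : Finset N, v C = 0 → ∑ i ∈ C, p i ≤ (Fintype.card N : ℝ) / 4) := by
  classical
  obtain ⟨ι, t, w, W, hw0, hw1, hWwin, hWev⟩ := hull_rep_eval v 1 hwin
  obtain ⟨κ, s, u, L, hu0, hu1, hLlose, hLev⟩ := hull_rep_eval v 0 hlose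
  set n : ℝ := (Fintype.card N : ℝ) with hn
  have hNne : (Finset.univ : Finset N).Nonempty := by
    rcases Finset.eq_empty_or_nonempty (Finset.univ : Finset N) with h | h
    · rw [h] at hfull; omega
    · exact h
  have hnpos : 0 < n := by
    have := Finset.card_pos.mpr hNne
    simp only [hn, Finset.card_univ] at *
    exact_mod_cast Finset.card_pos.mpr hNne
  constructor
  · -- lower bound direction
    rintro p ⟨hp0, hp1⟩
    -- total mass p(N) ≥ n/2, from the winning-hull condition
    have hsum : n / 2 ≤ ∑ j, p j := by
      have h1 : ∑ j, p j * (2 / n) = ∑ k ∈ t, w k * ∑ j ∈ W k, p j := hWev p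
      have h2 : (1 : ℝ) ≤ ∑ k ∈ t, w k * ∑ j ∈ W k, p j := by
        rw [← hw1]
        refine Finset.sum_le_sum fun k hk => ?_
        have := hp1 (W k) (hWwin k hk)
        nlinarith [hw0 k hk]
      have h3 : (1:ℝ) ≤ (∑ j, p j) * 2 / n := by
        have : (∑ j, p j) * 2 / n = ∑ j, p j * (2 / n) := by
          rw [Finset.sum_mul, Finset.sum_div]
          exact Finset.sum_congr rfl fun j _ => by ring
        rw [this, h1]; exact h2
      have h4 := (one_le_div hnpos).mp h3
      linarith
    -- some losing coalition gets at least half the total mass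
    by_contra hcon
    push_neg at hcon
    have hC : ∀ k ∈ s, ∑ j ∈ L k, p j < n / 4 := fun k hk =>
      hcon (L k) (hLlose k hk)
    have h1 : ∑ j, p j * ((1:ℝ)/2) = ∑ k ∈ s, u k * ∑ j ∈ L k, p j := hLev p
    have h2 : ∑ k ∈ s, u k * ∑ j ∈ L k, p j ≤ ∑ k ∈ s, u k * (n / 4) := by
      refine Finset.sum_le_sum fun k hk => ?_
      exact mul_le_mul_of_nonneg_left (le_of_lt (hC k hk)) (hu0 k hk)
    have h3 : ∑ k ∈ s, u k * (n / 4) = n / 4 := by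
      rw [← Finset.sum_mul, hu1, one_mul]
    have h4 : (∑ j, p j) * ((1:ℝ)/2) = ∑ j, p j * ((1:ℝ)/2) := by
      rw [Finset.sum_mul]
    -- need strictness: some u k > 0
    have hkpos : ∃ k ∈ s, 0 < u k := by
      by_contra h
      push_neg at h
      have : ∑ k ∈ s, u k = 0 := Finset.sum_eq_zero fun k hk =>
        le_antisymm (h k hk) (hu0 k hk)
      rw [hu1] at this; norm_num at this
    obtain ⟨k0, hk0s, hk0⟩ := hkpos
    have h2' : ∑ k ∈ s, u k * ∑ j ∈ L k, p j < ∑ k ∈ s, u k * (n / 4) := by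
      refine Finset.sum_lt_sum (fun k hk =>
        mul_le_mul_of_nonneg_left (le_of_lt (hC k hk)) (hu0 k hk)) ⟨k0, hk0s, ?_⟩
      exact mul_lt_mul_of_pos_left (hC k0 hk0s) hk0
    nlinarith [hsum, h1, h2', h3, h4]
  · -- upper bound direction: p = (1/2)𝟙
    -- first: no singleton is winning
    have hsingle : ∀ i : N, v {i} = 0 := by
      intro i
      rcases hv01 {i} with h | h
      · exact h
      · exfalso
        -- coordinate i of (1/2)𝟙 via losing hull: some losing coalition contains i
        have hev := hLev (fun j => if j = i then 1 else 0)
        have hlhs : ∑ j, (if j = i then (1:ℝ) else 0) * ((1:ℝ)/2) = 1/2 := by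
          simp
        have hall : ∀ k ∈ s, ∑ j ∈ L k, (if j = i then (1:ℝ) else 0) = 0 := by
          intro k hk
          have hiL : i ∉ L k := by
            intro hiL
            have := hmono {i} (L k) (Finset.singleton_subset_iff.mpr hiL)
            rw [h, hLlose k hk] at this; omega
          refine Finset.sum_eq_zero fun j hj => ?_
          have : j ≠ i := fun hji => hiL (hji ▸ hj)
          simp [this]
        have : ∑ k ∈ s, u k * ∑ j ∈ L k, (if j = i then (1:ℝ) else 0) = 0 :=
          Finset.sum_eq_zero fun k hk => by rw [hall k hk, mul_zero]
        rw [hlhs, this] at hev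
        norm_num at hev
    -- every winning coalition has ≥ 2 elements
    have hwin2 : ∀ C : Finset N, v C = 1 → 2 ≤ C.card := by
      intro C hC
      by_contra h
      push_neg at h
      interval_cases hcc : C.card
      · rw [Finset.card_eq_zero] at hcc; rw [hcc, hempty] at hC; omega
      · rw [Finset.card_eq_one] at hcc
        obtain ⟨i, rfl⟩ := hcc
        rw [hsingle i] at hC; omega
    -- ∑ w k * |W k| = 2 (evaluate winning hull against 𝟙)
    have hWsize : ∑ k ∈ t, w k * ((W k).card : ℝ) = 2 := by
      have hev := hWev (fun _ => 1)
      have hlhs : ∑ _j : N, (1:ℝ) * (2 / n) = 2 := by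
        rw [Finset.sum_const, Finset.card_univ, nsmul_eq_mul, one_mul]
        field_simp
        exact hn.symm
      rw [hlhs] at hev
      rw [hev]
      refine Finset.sum_congr rfl fun k _ => ?_
      simp
    -- every losing coalition has ≤ n/2 elements
    have hlose2 : ∀ C : Finset N, v C = 0 → (C.card : ℝ) ≤ n / 2 := by
      intro C hC
      have hev := hWev (fun j => if j ∈ C then 1 else 0)
      have hlhs : ∑ j, (if j ∈ C then (1:ℝ) else 0) * (2 / n) = (C.card : ℝ) * (2 / n) := by
        rw [← Finset.sum_mul]
        congr 1
        rw [Finset.sum_ite_mem, Finset.univ_inter, Finset.sum_const, nsmul_eq_mul, mul_one]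
      have hterm : ∀ k ∈ t, ∑ j ∈ W k, (if j ∈ C then (1:ℝ) else 0)
          ≤ ((W k).card : ℝ) - 1 := by
        intro k hk
        have hsub : ¬ W k ⊆ C := by
          intro hsub
          have := hmono (W k) C hsub
          rw [hWwin k hk, hC] at this; omega
        have hlt : (W k ∩ C).card < (W k).card := by
          refine Finset.card_lt_card ?_
          constructor
          · exact Finset.inter_subset_left
          · intro hWI
            exact hsub fun x hx => (Finset.mem_inter.mp (hWI hx)).2
        have : ∑ j ∈ W k, (if j ∈ C then (1:ℝ) else 0) = ((W k ∩ C).card : ℝ) := by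
          rw [Finset.sum_ite_mem, Finset.sum_const, nsmul_eq_mul, mul_one]
        rw [this]
        have : (W k ∩ C).card + 1 ≤ (W k).card := hlt
        have := (Nat.cast_le (α := ℝ)).mpr this
        push_cast at this
        linarith
      have hrhs : ∑ k ∈ t, w k * ∑ j ∈ W k, (if j ∈ C then (1:ℝ) else 0)
          ≤ ∑ k ∈ t, w k * (((W k).card : ℝ) - 1) := by
        refine Finset.sum_le_sum fun k hk =>
          mul_le_mul_of_nonneg_left (hterm k hk) (hw0 k hk)
      have hrhs2 : ∑ k ∈ t, w k * (((W k).card : ℝ) - 1) = 1 := by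
        have : ∑ k ∈ t, w k * (((W k).card : ℝ) - 1)
            = ∑ k ∈ t, (w k * ((W k).card : ℝ) - w k) := by
          refine Finset.sum_congr rfl fun k _ => by ring
        rw [this, Finset.sum_sub_distrib, hWsize, hw1]; norm_num
      have : (C.card : ℝ) * (2 / n) ≤ 1 := by
        rw [← hlhs, hev]; rw [hrhs2] at hrhs; exact hrhs
      rw [le_div_iff₀ (by norm_num : (0:ℝ) < 2)]
      have h5 : (C.card : ℝ) * (2 / n) = (C.card : ℝ) * 2 / n := by ring
      rw [h5] at this
      have h6 := (div_le_one hnpos).mp this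
      linarith
    refine ⟨fun _ => 1/2, ⟨fun i => by norm_num, fun C hC => ?_⟩, fun C hC => ?_⟩
    · have h2 := hwin2 C hC
      rw [Finset.sum_const, nsmul_eq_mul]
      have : (2:ℝ) ≤ (C.card : ℝ) := by exact_mod_cast h2
      nlinarith
    · have h2 := hlose2 C hC
      rw [Finset.sum_const, nsmul_eq_mul]
      nlinarith
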